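/- Let ψ₁, …, ψₙ be satisfiable propositional formulas that are pairwise contradicting (each ψᵢ is satisfiable, but ψᵢ ∧ ψⱼ is unsatisfiable for i ≠ j), where each ψᵢ is a conjunction of literals. Then the total number of literal occurrences across ψ₁,…,ψₙ is at least n · log₂ n. -/

import Mathlib

/-- A conjunction of literals, represented as a list of (variable, polarity) pairs,
is satisfied by an assignment `θ` iff every literal agrees with `θ`. -/
def LitConjSat (θ : ℕ → Bool) (L : List (ℕ × Bool)) : Prop :=
  ∀ l ∈ L, θ l.1 = l.2

/-- If `ψ₁, …, ψₙ` are satisfiable conjunctions of literals that are pairwise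
contradicting (each is satisfiable but no two are jointly satisfiable), then the
total number of literal occurrences is at least `n · log₂ n`. -/

lemma kraft_aux (n : ℕ) (hn : 0 < n) (L : Fin n → ℕ)
    (h : ∑ i, (1/2 : ℝ) ^ (L i) ≤ 1) :
    (n : ℝ) * Real.logb 2 n ≤ ∑ i, (L i : ℝ) := by
  set S : ℝ := ∑ i, (L i : ℝ) with hS
  have hn' : (0:ℝ) < n := by exact_mod_cast hn
  set a : ℝ := S / n with ha
  have hsum0 : ∑ i : Fin n, (a - (L i : ℝ)) = 0 := by
    rw [Finset.sum_sub_distrib, ← hS, Finset.sum_const, Finset.card_univ, Fintype.card_fin,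
      nsmul_eq_mul, ha]
    field_simp; ring
  set E : ℝ := Real.exp (-(a * Real.log 2)) with hE
  have hEpos : (0:ℝ) < E := Real.exp_pos _
  have step : ∀ i : Fin n, E * (1 + (a - (L i : ℝ)) * Real.log 2) ≤ (1/2 : ℝ) ^ (L i) := by
    intro i
    have h1 : (a - (L i : ℝ)) * Real.log 2 + 1 ≤ Real.exp ((a - (L i : ℝ)) * Real.log 2) :=
      Real.add_one_le_exp _
    have h2 : E * (1 + (a - (L i : ℝ)) * Real.log 2)
        ≤ E * Real.exp ((a - (L i : ℝ)) * Real.log 2) := by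
      apply mul_le_mul_of_nonneg_left _ hEpos.le
      linarith
    have h3 : E * Real.exp ((a - (L i : ℝ)) * Real.log 2)
        = Real.exp (-((L i : ℝ) * Real.log 2)) := by
      rw [hE, ← Real.exp_add]; ring_nf
    have h4 : ((1/2 : ℝ)) ^ (L i) = Real.exp (-((L i : ℝ) * Real.log 2)) := by
      rw [Real.exp_neg, Real.exp_nat_mul, Real.exp_log two_pos, one_div, inv_pow]
    rw [h4]
    calc E * (1 + (a - (L i : ℝ)) * Real.log 2) ≤ _ := h2
      _ = _ := h3
  have key : (n : ℝ) * E ≤ 1 := by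
    have : (n : ℝ) * E = ∑ i : Fin n, E * (1 + (a - (L i : ℝ)) * Real.log 2) := by
      rw [← Finset.mul_sum]
      rw [Finset.sum_add_distrib, ← Finset.sum_mul, hsum0, Finset.sum_const, Finset.card_univ,
        Fintype.card_fin, nsmul_eq_mul]
      ring
    rw [this]
    exact le_trans (Finset.sum_le_sum fun i _ => step i) h
  have hlogle : Real.log n + (-(a * Real.log 2)) ≤ 0 := by
    have h5 : Real.log ((n : ℝ) * E) ≤ 0 := by
      rw [← Real.log_one]
      exact Real.log_le_log (by positivity) key
    rwa [Real.log_mul (by positivity) hEpos.ne', hE, Real.log_exp] at h5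
  have hlog2 : (0:ℝ) < Real.log 2 := Real.log_pos (by norm_num)
  have hlb : Real.logb 2 n ≤ a := by
    rw [Real.logb, div_le_iff₀ hlog2]
    linarith
  calc (n : ℝ) * Real.logb 2 n ≤ n * a := by
        exact mul_le_mul_of_nonneg_left hlb hn'.le
    _ = S := by rw [ha]; field_simp

lemma comb_aux (n : ℕ) (ψ : Fin n → List (ℕ × Bool))
    (hsat : ∀ i, ∃ θ, LitConjSat θ (ψ i))
    (hcontra : ∀ i j, i ≠ j → ¬ ∃ θ, LitConjSat θ (ψ i) ∧ LitConjSat θ (ψ j)) :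
    ∑ i, (1/2 : ℝ) ^ (ψ i).length ≤ 1 := by
  classical
  choose θ hθ using hsat
  -- bound on the variables
  obtain ⟨m, hm⟩ : ∃ m, ∀ i, ∀ p ∈ ψ i, p.1 < m := by
    refine ⟨(Finset.univ.sup fun i => ((ψ i).map Prod.fst).sum) + 1, fun i p hp => ?_⟩
    have h1 : p.1 ≤ ((ψ i).map Prod.fst).sum :=
      List.single_le_sum (fun _ _ => Nat.zero_le _) _ (List.mem_map_of_mem (f := Prod.fst) hp)
    have h2 : ((ψ i).map Prod.fst).sum ≤ Finset.univ.sup fun i => ((ψ i).map Prod.fst).sum :=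
      Finset.le_sup (f := fun i => ((ψ i).map Prod.fst).sum) (Finset.mem_univ i)
    omega
  set emb : (Fin m → Bool) → (ℕ → Bool) :=
    fun f k => if h : k < m then f ⟨k, h⟩ else false with hemb
  set A : Fin n → Finset (Fin m → Bool) :=
    fun i => Finset.univ.filter (fun f => LitConjSat (emb f) (ψ i)) with hA
  have disj : ∀ i j, i ≠ j → Disjoint (A i) (A j) := by
    intro i j hij
    rw [Finset.disjoint_left]
    intro f hfi hfj
    exact hcontra i j hij ⟨emb f, (Finset.mem_filter.mp hfi).2, (Finset.mem_filter.mp hfj).2⟩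
  have hsumcard : ∑ i, (A i).card ≤ 2 ^ m := by
    rw [← Finset.card_biUnion (fun i _ j _ h => disj i j h)]
    calc (Finset.univ.biUnion A).card ≤ (Finset.univ : Finset (Fin m → Bool)).card :=
          Finset.card_le_univ _
      _ = 2 ^ m := by simp [Fintype.card_fun]
  set W : Fin n → Finset (Fin m) :=
    fun i => Finset.univ.filter (fun x => ∃ p ∈ ψ i, p.1 = (x : ℕ)) with hW
  have hWlen : ∀ i, (W i).card ≤ (ψ i).length := by
    intro i
    have h1 : (W i).card ≤ ((ψ i).map Prod.fst).toFinset.card := by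
      refine Finset.card_le_card_of_injOn (fun x => (x : ℕ)) ?_ ?_
      · intro x hx
        obtain ⟨p, hp, hpx⟩ := (Finset.mem_filter.mp hx).2
        simp only [List.mem_toFinset, List.mem_map]
        exact List.mem_dedup.mpr (List.mem_map.mpr ⟨p, hp, hpx⟩)
      · intro x _ y _ hxy
        exact Fin.val_injective hxy
    calc (W i).card ≤ _ := h1
      _ ≤ ((ψ i).map Prod.fst).length := List.toFinset_card_le _
      _ = (ψ i).length := List.length_map _
  have hWm : ∀ i, (W i).card ≤ m := fun i =>
    le_trans (Finset.card_le_univ _) (by simp)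
  have hcardA : ∀ i, 2 ^ (m - (W i).card) ≤ (A i).card := by
    intro i
    set g : (((W i)ᶜ : Finset (Fin m)) → Bool) → (Fin m → Bool) :=
      fun f x => if hx : x ∈ W i then θ i (x : ℕ) else f ⟨x, by simpa using hx⟩ with hg
    have hmem : ∀ f, g f ∈ A i := by
      intro f
      rw [hA]
      simp only [Finset.mem_filter, Finset.mem_univ, true_and]
      intro p hp
      have hpm : p.1 < m := hm i p hp
      have : emb (g f) p.1 = g f ⟨p.1, hpm⟩ := by
        rw [hemb]; simp [hpm]
      rw [this, hg]
      have hpin : (⟨p.1, hpm⟩ : Fin m) ∈ W i := by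
        rw [hW]; simp only [Finset.mem_filter, Finset.mem_univ, true_and]
        exact ⟨p, hp, rfl⟩
      simp only [hpin, dif_pos]
      exact hθ i p hp
    have hinj : Function.Injective g := by
      intro f1 f2 hf
      funext x
      have hxn : ¬ ((x : Fin m) ∈ W i) := Finset.mem_compl.mp x.2
      have := congrFun hf (x : Fin m)
      rw [hg] at this
      simp only [hxn, dif_neg, not_false_iff] at this
      convert this
    have : Fintype.card (((W i)ᶜ : Finset (Fin m)) → Bool) ≤ (A i).card := by
      rw [← Fintype.card_coe (A i)]
      exact Fintype.card_le_of_injective (fun f => ⟨g f, hmem f⟩)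
        (fun f1 f2 h => hinj (congrArg Subtype.val h))
    calc 2 ^ (m - (W i).card) = Fintype.card (((W i)ᶜ : Finset (Fin m)) → Bool) := by
          simp [Fintype.card_fun, Finset.card_compl]
      _ ≤ _ := this
  -- now to the reals
  have hreal : ∀ i, (1/2 : ℝ) ^ (ψ i).length * 2 ^ m ≤ ((A i).card : ℝ) := by
    intro i
    have h1 : (1/2 : ℝ) ^ (ψ i).length ≤ (1/2 : ℝ) ^ (W i).card :=
      pow_le_pow_of_le_one (by norm_num) (by norm_num) (hWlen i)
    have h2 : (1/2 : ℝ) ^ (W i).card * 2 ^ m = 2 ^ (m - (W i).card) := by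
      have hsplit : (2:ℝ) ^ m = 2 ^ (m - (W i).card) * 2 ^ (W i).card := by
        rw [← pow_add]; congr 1; have := hWm i; omega
      rw [hsplit, one_div, inv_pow, inv_mul_eq_div, mul_div_assoc,
        div_self (by positivity : (0:ℝ) < 2 ^ (W i).card).ne', mul_one]
    calc (1/2 : ℝ) ^ (ψ i).length * 2 ^ m ≤ (1/2 : ℝ) ^ (W i).card * 2 ^ m := by
          apply mul_le_mul_of_nonneg_right h1 (by positivity)
      _ = 2 ^ (m - (W i).card) := h2
      _ ≤ ((A i).card : ℝ) := by exact_mod_cast hcardA i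
  have hfinal : (∑ i, (1/2 : ℝ) ^ (ψ i).length) * 2 ^ m ≤ 2 ^ m := by
    rw [Finset.sum_mul]
    calc ∑ i, (1/2 : ℝ) ^ (ψ i).length * 2 ^ m ≤ ∑ i, ((A i).card : ℝ) :=
          Finset.sum_le_sum fun i _ => hreal i
      _ ≤ 2 ^ m := by exact_mod_cast hsumcard
  have h2m : (0:ℝ) < 2 ^ m := by positivity
  nlinarith [hfinal, h2m]

theorem contradicting_conjunctions_lower_bound (n : ℕ) (ψ : Fin n → List (ℕ × Bool))
    (hsat : ∀ i, ∃ θ, LitConjSat θ (ψ i))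
    (hcontra : ∀ i j, i ≠ j → ¬ ∃ θ, LitConjSat θ (ψ i) ∧ LitConjSat θ (ψ j)) :
    (n : ℝ) * Real.logb 2 n ≤ ((∑ i, (ψ i).length : ℕ) : ℝ) := by
  rcases Nat.eq_zero_or_pos n with hn | hn
  · subst hn; simp
  · have h1 := comb_aux n ψ hsat hcontra
    have h2 := kraft_aux n hn (fun i => (ψ i).length) h1
    calc (n : ℝ) * Real.logb 2 n ≤ ∑ i, ((ψ i).length : ℝ) := h2
      _ = ((∑ i, (ψ i).length : ℕ) : ℝ) := by push_cast; rfl
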